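/- Let n = p^k be a prime power and let G be a group satisfying g^n = 1 for all g ∈ G. Let N be the intersection of all normal subgroups of G of finite index, and let R = G/N. If the abelianization of G is a cyclic group, then R is isomorphic to the abelianization of G; in particular R is a finite cyclic group of order dividing n. -/

import Mathlib

/-- The intersection of all normal subgroups of finite index of a group `G`. -/
def finiteResidual (G : Type*) [Group G] : Subgroup G :=
  ⨅ H ∈ {H : Subgroup G | H.Normal ∧ H.FiniteIndex}, H

instance finiteResidual_normal (G : Type*) [Group G] : (finiteResidual G).Normal := by
  constructor
  intro n hn g
  simp only [finiteResidual, Subgroup.mem_iInf] at hn ⊢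
  intro H hH
  exact hH.1.conj_mem n (hn H hH) g


open Subgroup

universe u

lemma abmap_surj {G H : Type*} [Group G] [Group H]
    (f : G →* H) (hf : Function.Surjective f) :
    Function.Surjective (Abelianization.map f) := by
  intro y
  induction y using QuotientGroup.induction_on with
  | H h =>
    obtain ⟨g, rfl⟩ := hf h
    exact ⟨Abelianization.of g, rfl⟩

lemma pgroup_cyclic_of_cyclic_ab (p : ℕ) (hp : p.Prime) :
    ∀ (n : ℕ) (Q : Type u) [Group Q] [Finite Q], Nat.card Q ≤ n → IsPGroup p Q →
      IsCyclic (Abelianization Q) → IsCyclic Q := by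
  intro n
  induction n with
  | zero =>
    intro Q _ _ hcard _ _
    have : 0 < Nat.card Q := Nat.card_pos
    omega
  | succ n ih =>
    intro Q _ _ hcard hQ hab
    rcases subsingleton_or_nontrivial Q with hs | hnt
    · exact isCyclic_of_subsingleton
    · haveI : Fact p.Prime := ⟨hp⟩
      have hZ : Nontrivial (Subgroup.center Q) := hQ.center_nontrivial
      have hlt : Nat.card (Q ⧸ Subgroup.center Q) < Nat.card Q := by
        rw [Subgroup.card_eq_card_quotient_mul_card_subgroup (Subgroup.center Q)]
        have h1 : 1 < Nat.card (Subgroup.center Q) :=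
          Finite.one_lt_card_iff_nontrivial.mpr hZ
        have h2 : 0 < Nat.card (Q ⧸ Subgroup.center Q) := Nat.card_pos
        nlinarith
      have hQ' : IsPGroup p (Q ⧸ Subgroup.center Q) := hQ.to_quotient _
      have hab' : IsCyclic (Abelianization (Q ⧸ Subgroup.center Q)) :=
        isCyclic_of_surjective _
          (abmap_surj (QuotientGroup.mk' (Subgroup.center Q)) (QuotientGroup.mk'_surjective _))
      have hcyc' : IsCyclic (Q ⧸ Subgroup.center Q) :=
        ih _ (by omega) hQ' hab'
      have hcomm : ∀ a b : Q, a * b = b * a := by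
        exact commutative_of_cyclic_center_quotient (QuotientGroup.mk' (Subgroup.center Q))
          (by rw [QuotientGroup.ker_mk'])
      -- Q is commutative, so `of : Q → Abelianization Q` is injective
      have hofinj : Function.Injective (Abelianization.of : Q →* Abelianization Q) := by
        intro a b hab2
        have : a * b⁻¹ ∈ commutator Q := by
          have : (a * b⁻¹ : Q) ∈ (QuotientGroup.mk' (commutator Q)).ker := by
            rw [MonoidHom.mem_ker, map_mul, map_inv]
            have : (QuotientGroup.mk' (commutator Q)) a = (QuotientGroup.mk' (commutator Q)) b :=
              hab2
            rw [this, mul_inv_cancel]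
          simpa [QuotientGroup.ker_mk'] using this
        have hbot : commutator Q = ⊥ := by
          rw [_root_.commutator_def, Subgroup.commutator_eq_bot_iff_le_centralizer]
          intro x _ y _
          exact (hcomm y x)
        rw [hbot, Subgroup.mem_bot] at this
        exact mul_inv_eq_one.mp this
      obtain ⟨y, hy⟩ := hab
      obtain ⟨x, rfl⟩ : ∃ x : Q, Abelianization.of x = y := by
        induction y using QuotientGroup.induction_on with
        | H h => exact ⟨h, rfl⟩
      refine ⟨x, fun a => ?_⟩
      obtain ⟨m, hm⟩ := hy (Abelianization.of a)
      refine ⟨m, hofinj ?_⟩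
      simpa [map_zpow] using hm

/-- Let `n = p^k` be a prime power and `G` a group of exponent dividing `n`.  If the
abelianization of `G` is cyclic, then the restricted quotient `R = G ⧸ N`, where `N` is the
intersection of all finite-index normal subgroups, is isomorphic to the abelianization of `G`;
in particular `R` is a finite cyclic group of order dividing `n`. -/
theorem restricted_quotient_of_cyclic_abelianization
    (p k : ℕ) (hp : p.Prime) (hk : 0 < k)
    (G : Type*) [Group G]
    (hexp : ∀ g : G, g ^ (p ^ k) = 1)
    (hab : IsCyclic (Abelianization G)) :
    Nonempty ((G ⧸ finiteResidual G) ≃* Abelianization G) ∧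
      Finite (G ⧸ finiteResidual G) ∧ IsCyclic (G ⧸ finiteResidual G) ∧
      Nat.card (G ⧸ finiteResidual G) ∣ p ^ k := by
  have hpk : p ^ k ≠ 0 := pow_ne_zero k hp.pos.ne'
  -- exponent of the abelianization
  have habexp : ∀ y : Abelianization G, y ^ (p ^ k) = 1 := by
    intro y
    induction y using QuotientGroup.induction_on with
    | H g =>
      show (Abelianization.of g) ^ (p ^ k) = 1
      rw [← map_pow, hexp g, map_one]
  -- the abelianization is finite
  haveI : IsCyclic (Abelianization G) := hab
  obtain ⟨y, hy⟩ := hab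
  have hyfin : IsOfFinOrder y := isOfFinOrder_iff_pow_eq_one.mpr ⟨p ^ k, by positivity, habexp y⟩
  have habfin : Finite (Abelianization G) := by
    have : (Subgroup.zpowers y : Set (Abelianization G)).Finite := finite_zpowers.mpr hyfin
    have htop : (Subgroup.zpowers y : Set (Abelianization G)) = Set.univ := by
      ext a; simp only [SetLike.mem_coe, Set.mem_univ, iff_true]; exact hy a
    rw [htop] at this
    exact Set.finite_univ_iff.mp this
  -- card of the abelianization divides p ^ k
  have hcard : Nat.card (Abelianization G) ∣ p ^ k := by
    rw [← orderOf_eq_card_of_forall_mem_zpowers hy]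
    exact orderOf_dvd_of_pow_eq_one (habexp y)
  -- the commutator subgroup has finite index
  haveI : Finite (G ⧸ commutator G) := habfin
  haveI hci : (commutator G).FiniteIndex := Subgroup.finiteIndex_of_finite_quotient
  -- finiteResidual G = commutator G
  have le1 : finiteResidual G ≤ commutator G := by
    apply iInf₂_le (commutator G)
    exact ⟨Subgroup.commutator_normal ⊤ ⊤, hci⟩
  have le2 : commutator G ≤ finiteResidual G := by
    apply le_iInf₂
    rintro H ⟨hN, hFI⟩
    haveI := hN; haveI := hFI
    haveI : Finite (G ⧸ H) := Subgroup.finite_quotient_of_finiteIndex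
    have hpQ : IsPGroup p (G ⧸ H) := by
      intro q
      refine ⟨k, ?_⟩
      obtain ⟨g, rfl⟩ := QuotientGroup.mk'_surjective H q
      rw [← map_pow, hexp g, map_one]
    have habQ : IsCyclic (Abelianization (G ⧸ H)) :=
      isCyclic_of_surjective _ (abmap_surj (QuotientGroup.mk' H) (QuotientGroup.mk'_surjective H))
    have hcyc : IsCyclic (G ⧸ H) :=
      pgroup_cyclic_of_cyclic_ab p hp (Nat.card (G ⧸ H)) (G ⧸ H) le_rfl hpQ habQ
    haveI := hcyc
    letI : CommGroup (G ⧸ H) := IsCyclic.commGroup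
    have := Abelianization.commutator_subset_ker (QuotientGroup.mk' H)
    rwa [QuotientGroup.ker_mk'] at this
  have heq : finiteResidual G = commutator G := le_antisymm le1 le2
  have e : (G ⧸ finiteResidual G) ≃* Abelianization G :=
    QuotientGroup.quotientMulEquivOfEq heq
  refine ⟨⟨e⟩, Finite.of_equiv _ e.symm.toEquiv, isCyclic_of_surjective e.symm e.symm.surjective, ?_⟩
  rw [Nat.card_congr e.toEquiv]
  exact hcard
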